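/- Scaling a single entry to zero is the minimal Frobenius perturbation to create a common left-kernel when the remaining structure forces it: if E = diag(c₁, …, c_k, 0, …) is diagonal with exactly the entries c₁,…,c_k nonzero in rows 1..k and B is supported only on rows outside 1..k, then the minimum Frobenius norm perturbation Δ of the diagonal entries of E making rank [E+Δ_E, B] < n (n = number of rows) is min_i |c_i|, achieved by zeroing the smallest-magnitude c_i. -/

import Mathlib

lemma rows_li_of_rank_eq_card {p q : Type*} [Fintype p] [Fintype q]
    (M : Matrix p q ℝ) (h : M.rank = Fintype.card p) : LinearIndependent ℝ M := by
  change LinearIndependent ℝ M.row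
  rw [linearIndependent_iff_card_eq_finrank_span, Set.finrank,
    ← M.rank_eq_finrank_span_row, h]

/-- If `E` is diagonal with nonzero entries `c₀,…,c_{k-1}` in the first `k`
rows and zeros afterwards, `B` vanishes on the first `k` rows, and the last
`n - k` rows of `[E B]` have full rank `n - k`, then the minimal Frobenius norm
of a structured perturbation `δ` of the first `k` diagonal entries of `E`
making `[E + Δ_E(δ), B]` rank deficient is `min_i |c i|`. -/
theorem min_structured_perturbation_is_smallest_entry (n m k : ℕ)
    (hk : 0 < k) (hkn : k ≤ n) (c : Fin k → ℝ) (hc : ∀ i, c i ≠ 0)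
    (E : Matrix (Fin n) (Fin n) ℝ) (B : Matrix (Fin n) (Fin m) ℝ)
    (hE : E = Matrix.diagonal (fun i : Fin n =>
      if h : (i : ℕ) < k then c ⟨i, h⟩ else 0))
    (hB : ∀ (i : Fin n), (i : ℕ) < k → ∀ j, B i j = 0)
    (hbot : (Matrix.of fun (i : Fin (n - k)) (j : Fin n ⊕ Fin m) =>
        Matrix.fromCols E B ⟨k + (i : ℕ), by omega⟩ j).rank = n - k) :
    IsLeast {x : ℝ | ∃ δ : Fin k → ℝ,
        (Matrix.fromCols
          (E + Matrix.diagonal (fun i : Fin n =>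
            if h : (i : ℕ) < k then δ ⟨i, h⟩ else 0)) B).rank < n ∧
        x = Real.sqrt (∑ i, δ i ^ 2)}
      (Finset.univ.inf' (by simp [Finset.univ_nonempty_iff, Fin.pos_iff_nonempty.mp hk])
        fun i => |c i|) := by
  classical
  have hne : (Finset.univ : Finset (Fin k)).Nonempty := by
    simp [Finset.univ_nonempty_iff, Fin.pos_iff_nonempty.mp hk]
  obtain ⟨i₀, -, hi₀⟩ := Finset.exists_mem_eq_inf' hne (fun i => |c i|)
  constructor
  · -- membership
    refine ⟨fun i => if i = i₀ then -c i₀ else 0, ?_, ?_⟩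
    · set M := Matrix.fromCols
        (E + Matrix.diagonal (fun i : Fin n =>
          if h : (i : ℕ) < k then (if (⟨i, h⟩ : Fin k) = i₀ then -c i₀ else 0) else 0)) B
        with hM
      have hi₀n : (i₀ : ℕ) < n := lt_of_lt_of_le i₀.2 hkn
      have hrow : M ⟨i₀, hi₀n⟩ = 0 := by
        funext j
        cases j with
        | inl j =>
          simp only [hM, hE, Matrix.fromCols_apply_inl, Matrix.add_apply,
            Matrix.diagonal_apply, Pi.zero_apply]
          by_cases hj : (⟨(i₀ : ℕ), hi₀n⟩ : Fin n) = j
          · rw [if_pos hj, if_pos hj]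
            have hik : ((⟨(i₀ : ℕ), hi₀n⟩ : Fin n) : ℕ) < k := i₀.2
            rw [dif_pos hik, dif_pos hik]
            simp [Fin.eta]
          · rw [if_neg hj, if_neg hj, add_zero]
        | inr j =>
          simp only [hM, Matrix.fromCols_apply_inr, Pi.zero_apply]
          exact hB _ i₀.2 j
      by_contra hcon
      push_neg at hcon
      have hle := M.rank_le_card_height
      simp only [Fintype.card_fin] at hle
      have heq : M.rank = Fintype.card (Fin n) := by
        simp only [Fintype.card_fin]; omega
      exact (rows_li_of_rank_eq_card M heq).ne_zero _ hrow
    · rw [hi₀]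
      have : ∑ i, (if i = i₀ then -c i₀ else 0) ^ 2 = c i₀ ^ 2 := by
        rw [Finset.sum_eq_single i₀]
        · simp
        · intro b _ hb; simp [hb]
        · simp
      rw [this, Real.sqrt_sq_eq_abs]
  · -- lower bound
    rintro x ⟨δ, hrank, rfl⟩
    by_contra hlt
    push_neg at hlt
    have key : ∀ i, |δ i| < |c i| := by
      intro i
      have h1 : δ i ^ 2 ≤ ∑ j, δ j ^ 2 :=
        Finset.single_le_sum (fun j _ => sq_nonneg (δ j)) (Finset.mem_univ i)
      have h2 : Real.sqrt (δ i ^ 2) ≤ Real.sqrt (∑ j, δ j ^ 2) := Real.sqrt_le_sqrt h1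
      rw [Real.sqrt_sq_eq_abs] at h2
      have h3 : (Finset.univ.inf' hne fun i => |c i|) ≤ |c i| :=
        Finset.inf'_le _ (Finset.mem_univ i)
      linarith
    have hcd : ∀ i : Fin k, c i + δ i ≠ 0 := by
      intro i h
      have hdi : δ i = -c i := by linarith
      have k1 := key i
      rw [hdi, abs_neg] at k1
      exact absurd k1 (lt_irrefl _)
    set M := Matrix.fromCols
        (E + Matrix.diagonal (fun i : Fin n =>
          if h : (i : ℕ) < k then δ ⟨i, h⟩ else 0)) B with hM
    set N := (Matrix.of fun (i : Fin (n - k)) (j : Fin n ⊕ Fin m) =>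
        Matrix.fromCols E B ⟨k + (i : ℕ), by omega⟩ j) with hN
    have hNli : LinearIndependent ℝ (fun t : Fin (n-k) => N t) := by
      apply rows_li_of_rank_eq_card
      simp [hbot]
    -- rows i ≥ k of M equal rows of N
    have hMN : ∀ t : Fin (n - k), M ⟨k + (t : ℕ), by omega⟩ = N t := by
      intro t
      funext j
      cases j with
      | inl j =>
        simp only [hM, hN, hE, Matrix.fromCols_apply_inl, Matrix.add_apply,
          Matrix.diagonal_apply, Matrix.of_apply]
        split_ifs with h1 h2
        · omega
        · norm_num
        · norm_num
      | inr j => rfl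
    have hli : LinearIndependent ℝ M := by
      change LinearIndependent ℝ (fun i => M i)
      rw [Fintype.linearIndependent_iff]
      intro g hg
      -- first: g vanishes on indices < k
      have hg1 : ∀ i : Fin n, (h : (i : ℕ) < k) → g i = 0 := by
        intro i hik
        have := congrFun hg (Sum.inl i)
        simp only [Finset.sum_apply, Pi.smul_apply, Pi.zero_apply, smul_eq_mul] at this
        have hval : ∀ l : Fin n, M l (Sum.inl i) =
            if l = i then (c ⟨i, hik⟩ + δ ⟨i, hik⟩) else 0 := by
          intro l
          simp only [hM, hE, Matrix.fromCols_apply_inl, Matrix.add_apply,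
            Matrix.diagonal_apply]
          split_ifs with h1 h2
          · subst h1; rfl
          · subst h1; exact absurd hik h2
          · norm_num
        simp only [hval, mul_ite, mul_zero] at this
        rw [Finset.sum_ite_eq' Finset.univ i (fun l => g l * (c ⟨i, hik⟩ + δ ⟨i, hik⟩))] at this
        simp only [Finset.mem_univ, if_true] at this
        exact (mul_eq_zero.mp this).resolve_right (hcd ⟨i, hik⟩)
      -- transfer to the bottom rows
      set e : (Fin k ⊕ Fin (n - k)) ≃ Fin n :=
        finSumFinEquiv.trans (finCongr (by omega)) with he
      have he2 : ∀ t : Fin (n - k), e (Sum.inr t) = ⟨k + (t : ℕ), by omega⟩ := by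
        intro t; apply Fin.ext; simp [he]
      have hsum : ∑ t : Fin (n - k), g ⟨k + (t : ℕ), by omega⟩ • N t = 0 := by
        have := Fintype.sum_equiv e (fun s => g (e s) • M (e s)) (fun i => g i • M i)
          (fun s => rfl)
        rw [hg] at this
        rw [Fintype.sum_sum_type] at this
        have hz : ∀ j : Fin k, g (e (Sum.inl j)) • M (e (Sum.inl j)) = 0 := by
          intro j
          have : ((e (Sum.inl j) : Fin n) : ℕ) < k := by
            simp only [he, Equiv.trans_apply, finCongr_apply, Fin.coe_cast,
              finSumFinEquiv_apply_left, Fin.coe_castAdd]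
            exact j.2
          rw [hg1 _ this, zero_smul]
        rw [Finset.sum_congr rfl (fun j _ => hz j), Finset.sum_const_zero, zero_add] at this
        calc ∑ t : Fin (n - k), g ⟨k + (t : ℕ), by omega⟩ • N t
            = ∑ t : Fin (n - k), g (e (Sum.inr t)) • M (e (Sum.inr t)) := by
              refine Finset.sum_congr rfl fun t _ => ?_
              rw [he2 t, hMN t]
          _ = 0 := this
      have hgz := (Fintype.linearIndependent_iff.mp hNli) _ hsum
      intro i
      by_cases hik : (i : ℕ) < k
      · exact hg1 i hik
      · have : i = ⟨k + ((⟨(i : ℕ) - k, by omega⟩ : Fin (n - k)) : ℕ), by omega⟩ := by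
          apply Fin.ext; simp; omega
        rw [this]
        exact hgz ⟨(i : ℕ) - k, by omega⟩
    have := LinearIndependent.rank_matrix (M := M) hli
    simp only [Fintype.card_fin] at this
    omega
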